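/- Let f be C¹, positive, strictly decreasing, integrable on [0,∞) with ∫₀^∞ f = 1 and s f(s) → 0 as s → ∞. If M : [t₀, T) → ℝ is increasing with M' (t) = min{ Λ/f(M(t)), −Λ/(2 M(t) f'(M(t))) } for a constant Λ > 0, and M(t) → ∞ as t → T, then T < ∞. Specifically, Λ(T − t₀) ≤ ∫_{M(t₀)}^∞ [f(s) − 2 s f'(s)] ds < ∞. -/

import Mathlib

open MeasureTheory Set Filter Topology

lemma key_min (x y L : ℝ) (hx : 0 < x) (hy : 0 < y) (hL : 0 < L) :
    L ≤ (x + y) * min (L / x) (L / y) := by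
  rcases min_cases (L / x) (L / y) with ⟨h, _⟩ | ⟨h, _⟩ <;> rw [h]
  · rw [mul_div_assoc', le_div_iff₀ hx]; nlinarith [div_nonneg hL.le hx.le]
  · rw [mul_div_assoc', le_div_iff₀ hy]; nlinarith [div_nonneg hL.le hy.le]

theorem stmt_16 (f : ℝ → ℝ)
    (hreg : ContDiff ℝ 1 f)
    (hpos : ∀ s, 0 ≤ s → 0 < f s)
    (hder : ∀ s, 0 ≤ s → deriv f s < 0)
    (hint : IntegrableOn f (Ici 0))
    (hone : (∫ s in Ioi (0:ℝ), f s) = 1)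
    (hlim : Tendsto (fun s => s * f s) atTop (nhds 0))
    (Λ t₀ T : ℝ) (hΛ : 0 < Λ) (ht₀T : t₀ < T)
    (M : ℝ → ℝ)
    (hMpos : ∀ t ∈ Ico t₀ T, 0 < M t)
    (hmono : StrictMonoOn M (Ico t₀ T))
    (hode : ∀ t ∈ Ico t₀ T,
      HasDerivAt M (min (Λ / f (M t)) (-(Λ / (2 * M t * deriv f (M t))))) t)
    (hblow : Tendsto M (nhdsWithin T (Iio T)) atTop) :
    IntegrableOn (fun s => f s - 2 * s * deriv f s) (Ioi (M t₀)) ∧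
    Λ * (T - t₀) ≤ ∫ s in Ioi (M t₀), (f s - 2 * s * deriv f s) := by
  set a := M t₀ with ha_def
  have ht₀mem : t₀ ∈ Ico t₀ T := ⟨le_refl _, ht₀T⟩
  have ha : 0 < a := hMpos t₀ ht₀mem
  have hfd : Differentiable ℝ f := hreg.differentiable one_ne_zero
  have hfc : Continuous f := hfd.continuous
  have hf'c : Continuous (deriv f) := hreg.continuous_deriv le_rfl
  set g : ℝ → ℝ := fun s => f s - 2 * s * deriv f s with hg_def
  have hgc : Continuous g := by
    exact hfc.sub ((continuous_const.mul continuous_id).mul hf'c)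
  -- pointwise nonnegativity of g on positive reals
  have hgpos : ∀ s : ℝ, 0 < s → 0 < g s := by
    intro s hs
    have h1 : 0 < f s := hpos s hs.le
    have h2 : deriv f s < 0 := hder s hs.le
    have : 0 < -(2 * s * deriv f s) := by nlinarith
    simp only [hg_def]; nlinarith
  -- antiderivative of -(2 s f'(s))
  set G : ℝ → ℝ := fun s => 2 * (∫ u in (0:ℝ)..s, f u) - 2 * (s * f s) with hG_def
  have hI_deriv : ∀ x : ℝ, HasDerivAt (fun s => ∫ u in (0:ℝ)..s, f u) (f x) x := by
    intro x
    exact intervalIntegral.integral_hasDerivAt_right (hfc.intervalIntegrable 0 x)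
      (hfc.stronglyMeasurableAtFilter _ _) hfc.continuousAt
  have hG_deriv : ∀ x : ℝ, HasDerivAt G (-(2 * x * deriv f x)) x := by
    intro x
    have h1 : HasDerivAt (fun s : ℝ => s * f s) (1 * f x + x * deriv f x) x :=
      (hasDerivAt_id x).mul (hfd x).hasDerivAt
    have h2 : HasDerivAt G (2 * f x - 2 * (1 * f x + x * deriv f x)) x :=
      ((hI_deriv x).const_mul 2).sub (h1.const_mul 2)
    convert h2 using 1; ring
  have hGlim : Tendsto G atTop (𝓝 2) := by
    have h1 : Tendsto (fun s : ℝ => ∫ u in (0:ℝ)..s, f u) atTop (𝓝 1) := by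
      have := intervalIntegral_tendsto_integral_Ioi (μ := volume) 0
        (hint.mono_set Ioi_subset_Ici_self) tendsto_id
      rwa [hone] at this
    have := (h1.const_mul 2).sub (hlim.const_mul 2)
    simpa using this
  have h2int : IntegrableOn (fun x => -(2 * x * deriv f x)) (Ioi a) := by
    refine integrableOn_Ioi_deriv_of_nonneg ((hG_deriv a).continuousAt.continuousWithinAt)
      (fun x hx => hG_deriv x) (fun x hx => ?_) hGlim
    have hx0 : 0 < x := ha.trans hx
    have := hder x hx0.le
    nlinarith
  have hfint : IntegrableOn f (Ioi a) :=
    hint.mono_set (fun x hx => (ha.trans hx).le)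
  have hgint : IntegrableOn g (Ioi a) := by
    have := hfint.add h2int
    simpa [hg_def, sub_eq_add_neg, Pi.add_def] using this
  refine ⟨hgint, ?_⟩
  -- FTC antiderivative of g
  set Φ : ℝ → ℝ := fun x => ∫ s in a..x, g s with hΦ_def
  have hΦd : ∀ x : ℝ, HasDerivAt Φ (g x) x := by
    intro x
    exact intervalIntegral.integral_hasDerivAt_right (hgc.intervalIntegrable a x)
      (hgc.stronglyMeasurableAtFilter _ _) hgc.continuousAt
  set ψ : ℝ → ℝ := fun t => Φ (M t) - Λ * t with hψ_def
  have hψd : ∀ t ∈ Ico t₀ T, HasDerivAt ψ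
      (g (M t) * min (Λ / f (M t)) (-(Λ / (2 * M t * deriv f (M t)))) - Λ) t := by
    intro t ht
    exact ((hΦd (M t)).comp t (hode t ht)).sub
      (by simpa using (hasDerivAt_id t).const_mul Λ)
  have hderiv_nonneg : ∀ t ∈ Ico t₀ T,
      0 ≤ g (M t) * min (Λ / f (M t)) (-(Λ / (2 * M t * deriv f (M t)))) - Λ := by
    intro t ht
    have hMt : 0 < M t := hMpos t ht
    have hx : 0 < f (M t) := hpos _ hMt.le
    have hy : 0 < -(2 * M t * deriv f (M t)) := by
      have := hder (M t) hMt.le; nlinarith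
    have hkey := key_min (f (M t)) (-(2 * M t * deriv f (M t))) Λ hx hy hΛ
    have hg_eq : g (M t) = f (M t) + -(2 * M t * deriv f (M t)) := by
      simp only [hg_def]; ring
    have hmin_eq : -(Λ / (2 * M t * deriv f (M t))) = Λ / (-(2 * M t * deriv f (M t))) := by
      rw [div_neg]
    rw [hg_eq, hmin_eq]
    linarith
  -- ψ is monotone on Ico t₀ T
  have hψmono : MonotoneOn ψ (Ico t₀ T) := by
    apply monotoneOn_of_deriv_nonneg (convex_Ico t₀ T)
    · exact fun t ht => (hψd t ht).continuousAt.continuousWithinAt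
    · rw [interior_Ico]
      exact fun t ht => ((hψd t (Ioo_subset_Ico_self ht)).differentiableAt).differentiableWithinAt
    · rw [interior_Ico]
      intro t ht
      rw [(hψd t (Ioo_subset_Ico_self ht)).deriv]
      exact hderiv_nonneg t (Ioo_subset_Ico_self ht)
  have hΦa : Φ a = 0 := intervalIntegral.integral_same
  have hgnonneg_ae : 0 ≤ᵐ[volume.restrict (Ioi a)] g := by
    filter_upwards [ae_restrict_mem measurableSet_Ioi] with x hx
    exact (hgpos x (ha.trans hx)).le
  have hbound : ∀ t ∈ Ico t₀ T, Λ * (t - t₀) ≤ ∫ s in Ioi a, g s := by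
    intro t ht
    have h1 : ψ t₀ ≤ ψ t := hψmono ht₀mem ht ht.1
    have hMle : a ≤ M t := by
      rcases eq_or_lt_of_le ht.1 with h | h
      · rw [← h]
      · exact (hmono ht₀mem ht h).le
    have h2 : Φ (M t) = ∫ s in Ioc a (M t), g s :=
      intervalIntegral.integral_of_le hMle
    have h3 : (∫ s in Ioc a (M t), g s) ≤ ∫ s in Ioi a, g s := by
      apply setIntegral_mono_set hgint hgnonneg_ae
      exact Eventually.of_forall (fun x hx => hx.1)
    have h4 : Λ * (t - t₀) ≤ Φ (M t) := by
      simp only [hψ_def, ha_def] at h1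
      rw [hΦa] at h1
      linarith
    linarith [h2 ▸ h4, h3]
  -- pass to the limit t → T⁻
  have hTlim : Tendsto (fun t => Λ * (t - t₀)) (nhdsWithin T (Iio T)) (𝓝 (Λ * (T - t₀))) := by
    apply Tendsto.mono_left _ nhdsWithin_le_nhds
    exact (tendsto_id.sub_const t₀).const_mul Λ
  refine le_of_tendsto hTlim ?_
  filter_upwards [Ioo_mem_nhdsLT_of_mem (by constructor <;> simp [ht₀T, le_refl] : T ∈ Ioc t₀ T)]
    with t ht
  exact hbound t ⟨ht.1.le, ht.2⟩
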